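/- Let w be an (ℓ,q)-partial multi Kreweras word with associated V-strict labeling f = W(w), and let {L'_1,…,L'_ℓ} be the noncrossing layer decomposition of f. Then Pro(f) is the V-strict labeling obtained by applying single-layer promotion Pro to each increasing labeling L'_i and then, within each fiber F_p (p ∈ {A,B,C}), sorting the resulting multiset of labels weakly increasingly. -/

import Mathlib

open scoped Classical

/-- The poset `V` on `{A, B, C}` with cover relations `A ⋖ B` and `A ⋖ C`. -/
inductive V : Type
  | A | B | C
deriving DecidableEq

instance : Fintype V where
  elems := ⟨{V.A, V.B, V.C}, by decide⟩
  complete x := by cases x <;> decide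

instance : PartialOrder V where
  le x y := x = y ∨ x = V.A
  le_refl x := Or.inl rfl
  le_trans x y z h1 h2 := by
    rcases h1 with rfl | rfl
    · exact h2
    · exact Or.inr rfl
  le_antisymm x y h1 h2 := by
    rcases h1 with rfl | rfl
    · rfl
    · rcases h2 with rfl | rfl <;> rfl

/-- A `V`-strict labeling of `V × [ℓ]` with labels in `[q]` (i.e. an element of
`L_{V×[ℓ]}(R^q)`): labels are in `{1, …, q}`, strictly increase along copies of `V`,
and weakly increase along the fibers. -/
def IsVL (ℓ q : ℕ) (f : V → Fin ℓ → ℕ) : Prop :=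
  (∀ p i, 1 ≤ f p i ∧ f p i ≤ q) ∧
  (∀ i, f V.A i < f V.B i ∧ f V.A i < f V.C i) ∧
  (∀ p, Monotone (f p))

/-- The label of `f` at `(p, i)` is raisable: there is another `V`-strict labeling `g`
with `g p i > f p i` agreeing with `f` at all `(p', i')` with `p' ≠ p`. -/
def Raisable (ℓ q : ℕ) (f : V → Fin ℓ → ℕ) (p : V) (i : Fin ℓ) : Prop :=
  ∃ g, IsVL ℓ q g ∧ f p i < g p i ∧ ∀ p' i', p' ≠ p → g p' i' = f p' i'

/-- The label of `f` at `(p, i)` is lowerable. -/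
def Lowerable (ℓ q : ℕ) (f : V → Fin ℓ → ℕ) (p : V) (i : Fin ℓ) : Prop :=
  ∃ g, IsVL ℓ q g ∧ g p i < f p i ∧ ∀ p' i', p' ≠ p → g p' i' = f p' i'

/-- The `k`-th Bender–Knuth involution: in each fiber, the free labels consist of `a`
raisable labels equal to `k` followed by `b` lowerable labels equal to `k+1`; they are
replaced by `b` copies of `k` followed by `a` copies of `k+1`. -/
noncomputable def BK (ℓ q k : ℕ) (f : V → Fin ℓ → ℕ) : V → Fin ℓ → ℕ :=
  fun p i =>
    let S := Finset.univ.filter fun j : Fin ℓ => f p j = k ∧ Raisable ℓ q f p j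
    let T := Finset.univ.filter fun j : Fin ℓ => f p j = k + 1 ∧ Lowerable ℓ q f p j
    let U := S ∪ T
    if i ∈ U then (if (U.filter fun j => j < i).card < T.card then k else k + 1)
    else f p i

/-- `P`-strict promotion `Pro = τ_{q-1} ∘ ⋯ ∘ τ_2 ∘ τ_1`. -/
noncomputable def Pro (ℓ q : ℕ) (f : V → Fin ℓ → ℕ) : V → Fin ℓ → ℕ :=
  (List.range (q - 1)).foldl (fun g k => BK ℓ q (k + 1) g) f

/-- `m` encodes the unique noncrossing matching, in the generalized bump diagram of the
`(ℓ,q)`-partial multi Kreweras word corresponding to `f`, between the `A`'s and the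
letters `p` (`p = B` or `p = C`): the `s`-th `A` (in the linear order: blocks in order,
`B`'s and `C`'s preceding `A`'s within a block) is matched to the `m s`-th `p`, which
must lie in a strictly later block, and no two arcs form a crossing (arcs
`(A_s, j_s)`, `(A_{s'}, j_{s'})` with `s < s'` cross exactly when the block of `A_{s'}`
strictly precedes the block `j_s` of the first closer, which strictly precedes the
block `j_{s'}` of the second closer). -/
def IsNCMatching (ℓ : ℕ) (f : V → Fin ℓ → ℕ) (p : V) (m : Equiv.Perm (Fin ℓ)) : Prop :=
  (∀ s, f V.A s < f p (m s)) ∧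
  ∀ s s' : Fin ℓ, s < s' →
    ¬(f V.A s' < f p (m s) ∧ f p (m s) < f p (m s'))

/-- The `i`-th layer `L'_i` of the noncrossing layer decomposition: `A` is labeled by the
block of `A_i`, and `B`, `C` by the blocks of the `B` and `C` matched to `A_i`. -/
def Layer (ℓ : ℕ) (f : V → Fin ℓ → ℕ) (mB mC : Equiv.Perm (Fin ℓ)) (i : Fin ℓ) :
    V → ℕ
  | V.A => f V.A i
  | V.B => f V.B (mB i)
  | V.C => f V.C (mC i)

/-- Single-layer promotion: `P`-strict promotion on `L_{V×[1]}(R^q)`, i.e. on increasing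
labelings of `V` with labels in `[q]`. -/
noncomputable def Pro1 (q : ℕ) (g : V → ℕ) : V → ℕ :=
  fun p => Pro 1 q (fun p' _ => g p') p 0

section Helpers

lemma downclosed_mem_iff {n : ℕ} (D : Finset (Fin n))
    (h : ∀ i j : Fin n, i ≤ j → j ∈ D → i ∈ D) (i : Fin n) :
    i ∈ D ↔ i.val < D.card := by
  constructor
  · intro hi
    have hsub : Finset.Iic i ⊆ D := fun j hj => h j i (Finset.mem_Iic.mp hj) hi
    have := Finset.card_le_card hsub
    rw [Fin.card_Iic] at this
    omega
  · intro hc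
    by_contra hi
    have hsub : D ⊆ Finset.Iio i := by
      intro j hj
      rcases lt_or_ge j i with h' | h'
      · exact Finset.mem_Iio.mpr h'
      · exact absurd (h i j h' hj) hi
    have := Finset.card_le_card hsub
    rw [Fin.card_Iio] at this
    omega

/-- cumulative count function -/
noncomputable def cnt {n : ℕ} (u : Fin n → ℕ) (x : ℕ) : ℕ :=
  (Finset.univ.filter (fun i => u i ≤ x)).card

lemma cnt_mono {n : ℕ} (u : Fin n → ℕ) {x y : ℕ} (hxy : x ≤ y) : cnt u x ≤ cnt u y := by
  apply Finset.card_le_card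
  intro i hi
  simp only [Finset.mem_filter, Finset.mem_univ, true_and] at *
  exact hi.trans hxy

lemma cnt_le {n : ℕ} (u : Fin n → ℕ) (x : ℕ) : cnt u x ≤ n := by
  calc cnt u x ≤ (Finset.univ : Finset (Fin n)).card :=
        Finset.card_le_card (Finset.filter_subset _ _)
  _ = n := by simp

lemma cnt_rank {n : ℕ} {u : Fin n → ℕ} (hu : Monotone u) (i : Fin n) (x : ℕ) :
    u i ≤ x ↔ i.val < cnt u x := by
  have := downclosed_mem_iff (Finset.univ.filter (fun i => u i ≤ x))
    (fun a b hab hb => by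
      simp only [Finset.mem_filter, Finset.mem_univ, true_and] at *
      exact le_trans (hu hab) hb) i
  simpa [cnt] using this

lemma card_Iv {n : ℕ} (lo hi : ℕ) :
    (Finset.univ.filter (fun i : Fin n => lo ≤ i.val ∧ i.val < hi)).card
      = min hi n - min lo n := by
  rw [← Nat.card_Ico (min lo n) (min hi n)]
  apply Finset.card_bij (fun i _ => i.val)
  · intro a ha
    simp only [Finset.mem_filter, Finset.mem_univ, true_and] at ha
    have := a.isLt
    simp only [Finset.mem_Ico]
    omega
  · intro a _ b _ hab
    exact Fin.ext hab
  · intro x hx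
    simp only [Finset.mem_Ico] at hx
    have hxn : x < n := by omega
    refine ⟨⟨x, hxn⟩, ?_, rfl⟩
    simp only [Finset.mem_filter, Finset.mem_univ, true_and]
    omega

lemma card_lt_c {n : ℕ} (c : ℕ) (hc : c ≤ n) :
    (Finset.univ.filter (fun i : Fin n => i.val < c)).card = c := by
  have : (Finset.univ.filter (fun i : Fin n => i.val < c))
      = (Finset.univ.filter (fun i : Fin n => 0 ≤ i.val ∧ i.val < c)) := by
    ext i; simp
  rw [this, card_Iv]
  omega

end Helpers
section Chars
variable {ℓ q : ℕ} {g : V → Fin ℓ → ℕ}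

lemma vne1 : V.B ≠ V.A := by intro h; cases h
lemma vne2 : V.C ≠ V.A := by intro h; cases h

lemma raisA (hg : IsVL ℓ q g) (i : Fin ℓ) :
    Raisable ℓ q g V.A i ↔ (g V.A i + 2 ≤ g V.B i ∧ g V.A i + 2 ≤ g V.C i) := by
  obtain ⟨hbd, hst, hmono⟩ := hg
  constructor
  · rintro ⟨g', ⟨hbd', hst', hmono'⟩, hlt, hagree⟩
    have hB := (hst' i).1
    have hC := (hst' i).2
    rw [hagree V.B i vne1, hagree V.C i vne2] at *
    omega
  · rintro ⟨hB, hC⟩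
    refine ⟨fun p' j => if p' = V.A ∧ i.val ≤ j.val then max (g V.A j) (g V.A i + 1) else g p' j,
      ⟨?_, ?_, ?_⟩, ?_, ?_⟩
    · intro p j
      dsimp only
      have h1 := hbd V.A j
      have h2 := hbd p j
      have h3 := (hbd V.B i).2
      split_ifs with h <;> omega
    · intro j
      dsimp only
      have h1 := (hst j).1
      have h2 := (hst j).2
      constructor
      · rw [if_neg (fun hc : V.B = V.A ∧ i.val ≤ j.val => vne1 hc.1)]
        split_ifs with h
        · have := hmono V.B (Fin.le_def.mpr h.2); omega
        · omega
      · rw [if_neg (fun hc : V.C = V.A ∧ i.val ≤ j.val => vne2 hc.1)]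
        split_ifs with h
        · have := hmono V.C (Fin.le_def.mpr h.2); omega
        · omega
    · intro p j j' hj
      dsimp only
      have hm := hmono p hj
      have hmA := hmono V.A hj
      have hjn : (j : ℕ) ≤ (j' : ℕ) := hj
      by_cases hP : p = V.A
      · subst hP
        simp only [true_and]
        split_ifs <;> omega
      · rw [if_neg (fun hc => hP hc.1), if_neg (fun hc => hP hc.1)]
        exact hm
    · dsimp only
      rw [if_pos ⟨rfl, le_refl i.val⟩]
      omega
    · intro p' j hp'
      dsimp only
      rw [if_neg (fun hc => hp' hc.1)]

lemma lowA (hg : IsVL ℓ q g) (i : Fin ℓ) :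
    Lowerable ℓ q g V.A i ↔ 2 ≤ g V.A i := by
  obtain ⟨hbd, hst, hmono⟩ := hg
  constructor
  · rintro ⟨g', ⟨hbd', hst', hmono'⟩, hlt, hagree⟩
    have := (hbd' V.A i).1
    omega
  · intro h2
    refine ⟨fun p' j => if p' = V.A ∧ j.val ≤ i.val then min (g V.A j) (g V.A i - 1) else g p' j,
      ⟨?_, ?_, ?_⟩, ?_, ?_⟩
    · intro p j
      dsimp only
      have h1 := hbd V.A j
      have h2' := hbd p j
      split_ifs with h <;> omega
    · intro j
      dsimp only
      have h1 := (hst j).1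
      have h2' := (hst j).2
      constructor
      · rw [if_neg (fun hc : V.B = V.A ∧ j.val ≤ i.val => vne1 hc.1)]
        split_ifs with h <;> omega
      · rw [if_neg (fun hc : V.C = V.A ∧ j.val ≤ i.val => vne2 hc.1)]
        split_ifs with h <;> omega
    · intro p j j' hj
      dsimp only
      have hm := hmono p hj
      have hmA := hmono V.A hj
      have hjn : (j : ℕ) ≤ (j' : ℕ) := hj
      by_cases hP : p = V.A
      · subst hP
        simp only [true_and]
        split_ifs <;> omega
      · rw [if_neg (fun hc => hP hc.1), if_neg (fun hc => hP hc.1)]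
        exact hm
    · dsimp only
      rw [if_pos ⟨rfl, le_refl i.val⟩]
      omega
    · intro p' j hp'
      dsimp only
      rw [if_neg (fun hc => hp' hc.1)]

lemma raisP (hg : IsVL ℓ q g) {p : V} (hp : p ≠ V.A) (i : Fin ℓ) :
    Raisable ℓ q g p i ↔ g p i < q := by
  obtain ⟨hbd, hst, hmono⟩ := hg
  constructor
  · rintro ⟨g', ⟨hbd', hst', hmono'⟩, hlt, hagree⟩
    have := (hbd' p i).2
    omega
  · intro hlt
    have hAp : V.A ≠ p := fun h => hp h.symm
    refine ⟨fun p' j => if p' = p ∧ i.val ≤ j.val then max (g p j) (g p i + 1) else g p' j,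
      ⟨?_, ?_, ?_⟩, ?_, ?_⟩
    · intro p'' j
      dsimp only
      have h1 := hbd p j
      have h2 := hbd p'' j
      split_ifs with h <;> omega
    · intro j
      dsimp only
      have h1 := (hst j).1
      have h2 := (hst j).2
      rw [if_neg (fun hc : V.A = p ∧ i.val ≤ j.val => hAp hc.1)]
      constructor
      · split_ifs with h
        · obtain ⟨he, hij⟩ := h
          subst he
          have := hmono V.B (Fin.le_def.mpr hij)
          omega
        · exact h1
      · split_ifs with h
        · obtain ⟨he, hij⟩ := h
          subst he
          have := hmono V.C (Fin.le_def.mpr hij)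
          omega
        · exact h2
    · intro p'' j j' hj
      dsimp only
      have hm := hmono p'' hj
      have hmp := hmono p hj
      have hjn : (j : ℕ) ≤ (j' : ℕ) := hj
      by_cases hP : p'' = p
      · subst hP
        simp only [true_and]
        split_ifs <;> omega
      · rw [if_neg (fun hc => hP hc.1), if_neg (fun hc => hP hc.1)]
        exact hm
    · dsimp only
      rw [if_pos ⟨rfl, le_refl i.val⟩]
      omega
    · intro p' j hp'
      dsimp only
      rw [if_neg (fun hc => hp' hc.1)]

lemma lowP (hg : IsVL ℓ q g) {p : V} (hp : p ≠ V.A) (i : Fin ℓ) :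
    Lowerable ℓ q g p i ↔ g V.A i + 2 ≤ g p i := by
  obtain ⟨hbd, hst, hmono⟩ := hg
  have hAp : V.A ≠ p := fun h => hp h.symm
  constructor
  · rintro ⟨g', ⟨hbd', hst', hmono'⟩, hlt, hagree⟩
    have hstp' : g' V.A i < g' p i := by
      cases p
      · exact absurd rfl hp
      · exact (hst' i).1
      · exact (hst' i).2
    rw [hagree V.A i hAp] at hstp'
    omega
  · intro hge
    refine ⟨fun p' j => if p' = p ∧ j.val ≤ i.val then min (g p j) (g p i - 1) else g p' j,
      ⟨?_, ?_, ?_⟩, ?_, ?_⟩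
    · intro p'' j
      dsimp only
      have h1 := hbd p j
      have h2 := hbd p'' j
      have h0 := (hbd V.A i).1
      split_ifs with h <;> omega
    · intro j
      dsimp only
      have h1 := (hst j).1
      have h2 := (hst j).2
      rw [if_neg (fun hc : V.A = p ∧ j.val ≤ i.val => hAp hc.1)]
      constructor
      · split_ifs with h
        · obtain ⟨he, hij⟩ := h
          subst he
          have := hmono V.A (Fin.le_def.mpr hij)
          omega
        · exact h1
      · split_ifs with h
        · obtain ⟨he, hij⟩ := h
          subst he
          have := hmono V.A (Fin.le_def.mpr hij)
          omega
        · exact h2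
    · intro p'' j j' hj
      dsimp only
      have hm := hmono p'' hj
      have hmp := hmono p hj
      have hjn : (j : ℕ) ≤ (j' : ℕ) := hj
      by_cases hP : p'' = p
      · subst hP
        simp only [true_and]
        split_ifs <;> omega
      · rw [if_neg (fun hc => hP hc.1), if_neg (fun hc => hP hc.1)]
        exact hm
    · dsimp only
      rw [if_pos ⟨rfl, le_refl i.val⟩]
      have h0 := (hbd V.A i).1
      omega
    · intro p' j hp'
      dsimp only
      rw [if_neg (fun hc => hp' hc.1)]

end Chars
section BKeval
variable {ℓ q : ℕ} {g : V → Fin ℓ → ℕ} {k : ℕ} {p : V} {s0 n2 t2 : ℕ}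

lemma BK_eval
    (hS : ∀ i : Fin ℓ, (g p i = k ∧ Raisable ℓ q g p i) ↔ (s0 ≤ i.val ∧ i.val < n2))
    (hT : ∀ i : Fin ℓ, (g p i = k + 1 ∧ Lowerable ℓ q g p i) ↔ (n2 ≤ i.val ∧ i.val < t2))
    (hs : s0 ≤ n2) (hn : n2 ≤ t2) (ht : t2 ≤ ℓ) (i : Fin ℓ) :
    BK ℓ q k g p i =
      if s0 ≤ i.val ∧ i.val < t2 then (if i.val < s0 + (t2 - n2) then k else k + 1)
      else g p i := by
  have hU : ((Finset.univ.filter fun j : Fin ℓ => g p j = k ∧ Raisable ℓ q g p j) ∪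
      (Finset.univ.filter fun j : Fin ℓ => g p j = k + 1 ∧ Lowerable ℓ q g p j))
      = Finset.univ.filter (fun j : Fin ℓ => s0 ≤ j.val ∧ j.val < t2) := by
    ext j
    simp only [Finset.mem_union, Finset.mem_filter, Finset.mem_univ, true_and]
    rw [hS j, hT j]
    omega
  have hTc : (Finset.univ.filter fun j : Fin ℓ => g p j = k + 1 ∧ Lowerable ℓ q g p j).card
      = t2 - n2 := by
    have he : (Finset.univ.filter fun j : Fin ℓ => g p j = k + 1 ∧ Lowerable ℓ q g p j)
        = Finset.univ.filter (fun j : Fin ℓ => n2 ≤ j.val ∧ j.val < t2) := by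
      ext j
      simp only [Finset.mem_filter, Finset.mem_univ, true_and]
      exact hT j
    rw [he, card_Iv]
    omega
  show (if _ then _ else _) = _
  rw [hU, hTc]
  by_cases hi : s0 ≤ i.val ∧ i.val < t2
  · rw [if_pos, if_pos hi]
    · have hcard : ((Finset.univ.filter (fun j : Fin ℓ => s0 ≤ j.val ∧ j.val < t2)).filter
          (fun j => j < i)).card = i.val - s0 := by
        rw [Finset.filter_filter]
        have he : (Finset.univ.filter fun j : Fin ℓ => (s0 ≤ j.val ∧ j.val < t2) ∧ j < i)
            = Finset.univ.filter (fun j : Fin ℓ => s0 ≤ j.val ∧ j.val < i.val) := by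
          ext j
          simp only [Finset.mem_filter, Finset.mem_univ, true_and, Fin.lt_def]
          omega
        rw [he, card_Iv]
        have := i.isLt
        omega
      rw [hcard]
      have hiff : (i.val - s0 < t2 - n2) ↔ (i.val < s0 + (t2 - n2)) := by omega
      by_cases hc : i.val - s0 < t2 - n2
      · rw [if_pos hc, if_pos (hiff.mp hc)]
      · rw [if_neg hc, if_neg (fun hcc => hc (hiff.mpr hcc))]
    · simp only [Finset.mem_filter, Finset.mem_univ, true_and]
      exact hi
  · rw [if_neg, if_neg hi]
    simp only [Finset.mem_filter, Finset.mem_univ, true_and]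
    exact hi

lemma BK_cnt
    (hS : ∀ i : Fin ℓ, (g p i = k ∧ Raisable ℓ q g p i) ↔ (s0 ≤ i.val ∧ i.val < n2))
    (hT : ∀ i : Fin ℓ, (g p i = k + 1 ∧ Lowerable ℓ q g p i) ↔ (n2 ≤ i.val ∧ i.val < t2))
    (hs : s0 ≤ n2) (hn : n2 ≤ t2) (ht : t2 ≤ ℓ)
    (hlo : ∀ i : Fin ℓ, i.val < s0 → g p i ≤ k)
    (hhi : ∀ i : Fin ℓ, t2 ≤ i.val → k + 1 ≤ g p i)
    (hreg : ∀ i : Fin ℓ, s0 ≤ i.val → i.val < t2 → g p i = k ∨ g p i = k + 1) :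
    (∀ x, x ≠ k → cnt (BK ℓ q k g p) x = cnt (g p) x) ∧
      cnt (BK ℓ q k g p) k = s0 + (t2 - n2) := by
  have heval := BK_eval hS hT hs hn ht
  constructor
  · intro x hx
    unfold cnt
    apply Finset.card_nbij' id id <;> intro i hi <;>
      simp only [Finset.mem_coe, Finset.mem_filter, Finset.mem_univ, true_and, id] at * <;>
      rw [heval i] at * <;>
      [skip; skip] <;> split_ifs at * with h1 h2 <;>
      first
        | assumption
        | (rcases hreg i h1.1 h1.2 with h | h <;> omega)
  · unfold cnt
    have he : (Finset.univ.filter (fun i => BK ℓ q k g p i ≤ k))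
        = Finset.univ.filter (fun i : Fin ℓ => i.val < s0 + (t2 - n2)) := by
      ext i
      simp only [Finset.mem_filter, Finset.mem_univ, true_and]
      rw [heval i]
      split_ifs with h1 h2
      · omega
      · omega
      · constructor
        · intro hgi
          by_contra hc
          have := hhi i (by omega)
          omega
        · intro hc
          have h2 := hlo i (by omega)
          omega
    rw [he, card_lt_c]
    omega

end BKeval
section Step
set_option maxHeartbeats 1000000
variable {ℓ q : ℕ} {g : V → Fin ℓ → ℕ} {k : ℕ}

/-- fiber-A interval data -/
lemma hS_A (hg : IsVL ℓ q g) (hk : 1 ≤ k) (i : Fin ℓ) :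
    (g V.A i = k ∧ Raisable ℓ q g V.A i) ↔
      (min (cnt (g V.A) k) (max (cnt (g V.A) (k-1))
        (max (cnt (g V.B) (k+1)) (cnt (g V.C) (k+1)))) ≤ i.val ∧ i.val < cnt (g V.A) k) := by
  have hr := raisA hg i
  have e1 := cnt_rank (hg.2.2 V.A) i (k-1)
  have e2 := cnt_rank (hg.2.2 V.A) i k
  have e3 := cnt_rank (hg.2.2 V.B) i (k+1)
  have e4 := cnt_rank (hg.2.2 V.C) i (k+1)
  rw [hr]
  omega

lemma hT_A (hg : IsVL ℓ q g) (hk : 1 ≤ k) (i : Fin ℓ) :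
    (g V.A i = k + 1 ∧ Lowerable ℓ q g V.A i) ↔
      (cnt (g V.A) k ≤ i.val ∧ i.val < cnt (g V.A) (k+1)) := by
  have hr := lowA hg i
  have e2 := cnt_rank (hg.2.2 V.A) i k
  have e3 := cnt_rank (hg.2.2 V.A) i (k+1)
  rw [hr]
  omega

lemma hS_P (hg : IsVL ℓ q g) {p : V} (hp : p ≠ V.A) (hk : 1 ≤ k) (hkq : k < q) (i : Fin ℓ) :
    (g p i = k ∧ Raisable ℓ q g p i) ↔
      (cnt (g p) (k-1) ≤ i.val ∧ i.val < cnt (g p) k) := by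
  have hr := raisP hg hp i
  have e1 := cnt_rank (hg.2.2 p) i (k-1)
  have e2 := cnt_rank (hg.2.2 p) i k
  have hb := hg.1 p i
  rw [hr]
  omega

lemma hT_P (hg : IsVL ℓ q g) {p : V} (hp : p ≠ V.A) (hk : 1 ≤ k) (i : Fin ℓ) :
    (g p i = k + 1 ∧ Lowerable ℓ q g p i) ↔
      (cnt (g p) k ≤ i.val ∧
        i.val < max (cnt (g p) k) (min (cnt (g p) (k+1)) (cnt (g V.A) (k-1)))) := by
  have hr := lowP hg hp i
  have e1 := cnt_rank (hg.2.2 p) i k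
  have e2 := cnt_rank (hg.2.2 p) i (k+1)
  have e3 := cnt_rank (hg.2.2 V.A) i (k-1)
  rw [hr]
  have hstr : g V.A i < g p i := by
    cases p
    · exact absurd rfl hp
    · exact (hg.2.1 i).1
    · exact (hg.2.1 i).2
  omega

/-- parameters bundled: for a fiber p, `(s0, n2, t2)` -/
noncomputable def s0A (g : V → Fin ℓ → ℕ) (k : ℕ) : ℕ :=
  min (cnt (g V.A) k) (max (cnt (g V.A) (k-1))
    (max (cnt (g V.B) (k+1)) (cnt (g V.C) (k+1))))

noncomputable def t2P (g : V → Fin ℓ → ℕ) (p : V) (k : ℕ) : ℕ :=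
  max (cnt (g p) k) (min (cnt (g p) (k+1)) (cnt (g V.A) (k-1)))

lemma evalA (hg : IsVL ℓ q g) (hk : 1 ≤ k) (i : Fin ℓ) :
    BK ℓ q k g V.A i =
      if s0A g k ≤ i.val ∧ i.val < cnt (g V.A) (k+1) then
        (if i.val < s0A g k + (cnt (g V.A) (k+1) - cnt (g V.A) k) then k else k + 1)
      else g V.A i :=
  BK_eval (hS_A hg hk) (hT_A hg hk) (min_le_left _ _) (cnt_mono _ (by omega))
    (cnt_le _ _) i

lemma evalP (hg : IsVL ℓ q g) {p : V} (hp : p ≠ V.A) (hk : 1 ≤ k) (hkq : k < q) (i : Fin ℓ) :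
    BK ℓ q k g p i =
      if cnt (g p) (k-1) ≤ i.val ∧ i.val < t2P g p k then
        (if i.val < cnt (g p) (k-1) + (t2P g p k - cnt (g p) k) then k else k + 1)
      else g p i :=
  BK_eval (hS_P hg hp hk hkq) (hT_P hg hp hk) (cnt_mono _ (by omega)) (le_max_left _ _)
    (by
      apply max_le (cnt_le _ _)
      exact le_trans (min_le_left _ _) (cnt_le _ _)) i

lemma cntA_facts (hg : IsVL ℓ q g) (hk : 1 ≤ k) :
    (∀ x, x ≠ k → cnt (BK ℓ q k g V.A) x = cnt (g V.A) x) ∧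
      cnt (BK ℓ q k g V.A) k = s0A g k + (cnt (g V.A) (k+1) - cnt (g V.A) k) := by
  apply BK_cnt (hS_A hg hk) (hT_A hg hk) (min_le_left _ _) (cnt_mono _ (by omega)) (cnt_le _ _)
  · intro i hi
    have e2 := cnt_rank (hg.2.2 V.A) i k
    omega
  · intro i hi
    have e3 := cnt_rank (hg.2.2 V.A) i (k+1)
    omega
  · intro i h1 h2
    have e1 := cnt_rank (hg.2.2 V.A) i (k-1)
    have e2 := cnt_rank (hg.2.2 V.A) i k
    have e3 := cnt_rank (hg.2.2 V.A) i (k+1)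
    omega

lemma cntP_facts (hg : IsVL ℓ q g) {p : V} (hp : p ≠ V.A) (hk : 1 ≤ k) (hkq : k < q) :
    (∀ x, x ≠ k → cnt (BK ℓ q k g p) x = cnt (g p) x) ∧
      cnt (BK ℓ q k g p) k = cnt (g p) (k-1) + (t2P g p k - cnt (g p) k) := by
  apply BK_cnt (hS_P hg hp hk hkq) (hT_P hg hp hk) (cnt_mono _ (by omega)) (le_max_left _ _)
    (by
      apply max_le (cnt_le _ _)
      exact le_trans (min_le_left _ _) (cnt_le _ _))
  · intro i hi
    have e1 := cnt_rank (hg.2.2 p) i (k-1)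
    omega
  · intro i hi
    have e2 := cnt_rank (hg.2.2 p) i k
    omega
  · intro i h1 h2
    have e1 := cnt_rank (hg.2.2 p) i (k-1)
    have e2 := cnt_rank (hg.2.2 p) i k
    have e3 := cnt_rank (hg.2.2 p) i (k+1)
    omega

lemma BK_isVL (hg : IsVL ℓ q g) (hk : 1 ≤ k) (hkq : k + 1 ≤ q) :
    IsVL ℓ q (BK ℓ q k g) := by
  have hBn : V.B ≠ V.A := vne1
  have hCn : V.C ≠ V.A := vne2
  refine ⟨?_, ?_, ?_⟩
  · intro p i
    cases p
    · rw [evalA hg hk i]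
      have := hg.1 V.A i
      split_ifs <;> omega
    · rw [evalP hg hBn hk (by omega) i]
      have := hg.1 V.B i
      split_ifs <;> omega
    · rw [evalP hg hCn hk (by omega) i]
      have := hg.1 V.C i
      split_ifs <;> omega
  · intro i
    have hstB : g V.A i < g V.B i := (hg.2.1 i).1
    have hstC : g V.A i < g V.C i := (hg.2.1 i).2
    have eA := evalA hg hk i
    have eB := evalP hg hBn hk (by omega) i
    have eC := evalP hg hCn hk (by omega) i
    have a1 := cnt_rank (hg.2.2 V.A) i (k-1)
    have a2 := cnt_rank (hg.2.2 V.A) i k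
    have a3 := cnt_rank (hg.2.2 V.A) i (k+1)
    have b1 := cnt_rank (hg.2.2 V.B) i (k-1)
    have b2 := cnt_rank (hg.2.2 V.B) i k
    have b3 := cnt_rank (hg.2.2 V.B) i (k+1)
    have c1 := cnt_rank (hg.2.2 V.C) i (k-1)
    have c2 := cnt_rank (hg.2.2 V.C) i k
    have c3 := cnt_rank (hg.2.2 V.C) i (k+1)
    constructor
    · rw [eA, eB]
      split_ifs <;> simp only [s0A, t2P] at * <;> omega
    · rw [eA, eC]
      split_ifs <;> simp only [s0A, t2P] at * <;> omega
  · intro p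
    intro a b hab
    have habn : (a : ℕ) ≤ b := hab
    cases p
    · rw [evalA hg hk a, evalA hg hk b]
      have hm := hg.2.2 V.A hab
      have a2 := cnt_rank (hg.2.2 V.A) a k
      have a3 := cnt_rank (hg.2.2 V.A) a (k+1)
      have b2 := cnt_rank (hg.2.2 V.A) b k
      have b3 := cnt_rank (hg.2.2 V.A) b (k+1)
      have hs : s0A g k ≤ cnt (g V.A) k := min_le_left _ _
      split_ifs <;> omega
    · rw [evalP hg hBn hk (by omega) a, evalP hg hBn hk (by omega) b]
      have hm := hg.2.2 V.B hab
      have a1 := cnt_rank (hg.2.2 V.B) a (k-1)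
      have a2 := cnt_rank (hg.2.2 V.B) a k
      have a3 := cnt_rank (hg.2.2 V.B) a (k+1)
      have b1 := cnt_rank (hg.2.2 V.B) b (k-1)
      have b2 := cnt_rank (hg.2.2 V.B) b k
      have b3 := cnt_rank (hg.2.2 V.B) b (k+1)
      split_ifs <;> simp only [t2P] at * <;> omega
    · rw [evalP hg hCn hk (by omega) a, evalP hg hCn hk (by omega) b]
      have hm := hg.2.2 V.C hab
      have a1 := cnt_rank (hg.2.2 V.C) a (k-1)
      have a2 := cnt_rank (hg.2.2 V.C) a k
      have a3 := cnt_rank (hg.2.2 V.C) a (k+1)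
      have b1 := cnt_rank (hg.2.2 V.C) b (k-1)
      have b2 := cnt_rank (hg.2.2 V.C) b k
      have b3 := cnt_rank (hg.2.2 V.C) b (k+1)
      split_ifs <;> simp only [t2P] at * <;> omega

end Step
section Ident
set_option maxHeartbeats 1000000
open Finset

lemma card_split {n : ℕ} {P Q R : Fin n → Prop}
    [DecidablePred P] [DecidablePred Q] [DecidablePred R]
    (h : ∀ i, P i ↔ (Q i ∨ R i)) (hd : ∀ i, ¬(Q i ∧ R i)) :
    (univ.filter P).card = (univ.filter Q).card + (univ.filter R).card := by
  classical
  have hu : univ.filter P = univ.filter Q ∪ univ.filter R := by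
    ext i
    simp only [mem_union, mem_filter, mem_univ, true_and]
    exact h i
  rw [hu, Finset.card_union_of_disjoint]
  rw [Finset.disjoint_left]
  intro i hiQ hiR
  simp only [mem_filter, mem_univ, true_and] at hiQ hiR
  exact hd i ⟨hiQ, hiR⟩

lemma card_subset_le {n : ℕ} {P Q : Fin n → Prop}
    [DecidablePred P] [DecidablePred Q] (h : ∀ i, P i → Q i) :
    (univ.filter P).card ≤ (univ.filter Q).card := by
  classical
  apply Finset.card_le_card
  intro i hi
  simp only [mem_filter, mem_univ, true_and] at *
  exact h i hi

lemma card_congr' {n : ℕ} {P Q : Fin n → Prop}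
    [DecidablePred P] [DecidablePred Q] (h : ∀ i, P i ↔ Q i) :
    (univ.filter P).card = (univ.filter Q).card := by
  classical
  congr 1
  ext i
  simp only [mem_filter, mem_univ, true_and]
  exact h i

lemma inter_card_min {n : ℕ} (D E : Finset (Fin n))
    (hD : ∀ i j : Fin n, i ≤ j → j ∈ D → i ∈ D)
    (hE : ∀ i j : Fin n, i ≤ j → j ∈ E → i ∈ E) :
    (D ∩ E).card = min D.card E.card := by
  have hcomp : D ⊆ E ∨ E ⊆ D := by
    by_cases hDE : D ⊆ E
    · exact Or.inl hDE
    · right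
      obtain ⟨s, hsD, hsE⟩ := Finset.not_subset.mp hDE
      intro t htE
      rcases le_or_gt t s with hts | hts
      · exact hD t s hts hsD
      · exact absurd (hE s t (le_of_lt hts) htE) hsE
  rcases hcomp with hsub | hsub
  · rw [Finset.inter_eq_left.mpr hsub]
    exact (min_eq_left (Finset.card_le_card hsub)).symm
  · rw [Finset.inter_eq_right.mpr hsub]
    exact (min_eq_right (Finset.card_le_card hsub)).symm

variable {ℓ : ℕ} {a β γ : Fin ℓ → ℕ}

/-- β is antitone on the positions where a = 1 -/
lemma anti_ones (hamono : Monotone a) (ha1 : ∀ i, 1 ≤ a i)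
    (hstr : ∀ i, a i < β i)
    (hnc : ∀ i i' : Fin ℓ, i < i' → ¬(a i' < β i ∧ β i < β i'))
    {i i' : Fin ℓ} (hii : i ≤ i') (h1 : a i' = 1) : β i' ≤ β i := by
  rcases eq_or_lt_of_le hii with rfl | hlt
  · exact le_refl _
  · have h2 := hnc i i' hlt
    have h3 := hstr i
    have h4 := ha1 i
    by_contra hc
    exact h2 ⟨by omega, by omega⟩

lemma ones_downclosed (hamono : Monotone a) (ha1 : ∀ i, 1 ≤ a i)
    (hstr : ∀ i, a i < β i)
    (hnc : ∀ i i' : Fin ℓ, i < i' → ¬(a i' < β i ∧ β i < β i')) (v : ℕ) :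
    ∀ i j : Fin ℓ, i ≤ j → j ∈ univ.filter (fun i => a i = 1 ∧ v ≤ β i) →
      i ∈ univ.filter (fun i => a i = 1 ∧ v ≤ β i) := by
  intro i j hij hj
  simp only [mem_filter, mem_univ, true_and] at *
  have hmono := hamono hij
  have h1 := ha1 i
  have hone : a i = 1 := by omega
  exact ⟨hone, le_trans hj.2 (anti_ones hamono ha1 hstr hnc hij hj.1)⟩

/-- chain lemma: joint prefix cardinality is a min -/
lemma chain_card (hamono : Monotone a) (ha1 : ∀ i, 1 ≤ a i)
    (hstrβ : ∀ i, a i < β i)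
    (hncβ : ∀ i i' : Fin ℓ, i < i' → ¬(a i' < β i ∧ β i < β i'))
    (hstrγ : ∀ i, a i < γ i)
    (hncγ : ∀ i i' : Fin ℓ, i < i' → ¬(a i' < γ i ∧ γ i < γ i'))
    (v w : ℕ) :
    (univ.filter (fun i => a i = 1 ∧ v ≤ β i ∧ w ≤ γ i)).card
      = min (univ.filter (fun i => a i = 1 ∧ v ≤ β i)).card
          (univ.filter (fun i => a i = 1 ∧ w ≤ γ i)).card := by
  classical
  have hint : univ.filter (fun i => a i = 1 ∧ v ≤ β i ∧ w ≤ γ i)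
      = (univ.filter (fun i => a i = 1 ∧ v ≤ β i)) ∩ (univ.filter (fun i => a i = 1 ∧ w ≤ γ i)) := by
    ext i
    simp only [mem_inter, mem_filter, mem_univ, true_and]
    tauto
  rw [hint]
  exact inter_card_min _ _ (ones_downclosed hamono ha1 hstrβ hncβ v)
    (ones_downclosed hamono ha1 hstrγ hncγ w)

/-- the key noncrossing lemma -/
lemma keyL1 (hamono : Monotone a) (ha1 : ∀ i, 1 ≤ a i)
    (hstr : ∀ i, a i < β i)
    (hnc : ∀ i i' : Fin ℓ, i < i' → ¬(a i' < β i ∧ β i < β i'))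
    {k : ℕ} (hk : 1 ≤ k) :
    (univ.filter (fun i => a i = 1 ∧ k+2 ≤ β i)).card
      = min (univ.filter (fun i => a i = 1 ∧ k+1 ≤ β i)).card
          (univ.filter (fun i => a i ≤ k ∧ k+2 ≤ β i)).card := by
  classical
  have h1 : (univ.filter (fun i => a i = 1 ∧ k+2 ≤ β i)).card
      ≤ (univ.filter (fun i => a i = 1 ∧ k+1 ≤ β i)).card :=
    card_subset_le (fun i hi => ⟨hi.1, by omega⟩)
  have h2 : (univ.filter (fun i => a i = 1 ∧ k+2 ≤ β i)).card
      ≤ (univ.filter (fun i => a i ≤ k ∧ k+2 ≤ β i)).card :=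
    card_subset_le (fun i hi => ⟨by omega, hi.2⟩)
  by_cases hex : ∃ i0 : Fin ℓ, a i0 = 1 ∧ β i0 = k + 1
  · obtain ⟨i0, h01, h0b⟩ := hex
    have hsub : (univ.filter (fun i => a i ≤ k ∧ k+2 ≤ β i)).card
        ≤ (univ.filter (fun i => a i = 1 ∧ k+2 ≤ β i)).card := by
      apply card_subset_le
      intro i' hi'
      refine ⟨?_, hi'.2⟩
      by_contra hne
      have h2a : 2 ≤ a i' := by have := ha1 i'; omega
      have hlt : i0 < i' := by
        rcases lt_or_ge i0 i' with h | h
        · exact h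
        · have := hamono h
          omega
      exact hnc i0 i' hlt ⟨by omega, by omega⟩
    omega
  · push_neg at hex
    have heq : (univ.filter (fun i => a i = 1 ∧ k+1 ≤ β i)).card
        = (univ.filter (fun i => a i = 1 ∧ k+2 ≤ β i)).card := by
      apply card_congr'
      intro i
      constructor
      · rintro ⟨hi1, hib⟩
        have := hex i hi1
        exact ⟨hi1, by omega⟩
      · rintro ⟨hi1, hib⟩
        exact ⟨hi1, by omega⟩
    omega

/-- every closer at level ≤ x+1 is matched to an opener at level ≤ x -/
lemma closerFact (hstr : ∀ i, a i < β i) (x : ℕ) :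
    (univ.filter (fun i => β i ≤ x + 1)).card
      + (univ.filter (fun i => a i ≤ x ∧ x + 2 ≤ β i)).card
      = (univ.filter (fun i => a i ≤ x)).card := by
  symm
  apply card_split
  · intro i
    have := hstr i
    omega
  · intro i
    omega

end Ident
section Ident2
set_option maxHeartbeats 1600000
open Finset

variable {ℓ : ℕ} {a β γ : Fin ℓ → ℕ}

lemma identA (hamono : Monotone a) (ha1 : ∀ i, 1 ≤ a i)
    (hstrβ : ∀ i, a i < β i)
    (hncβ : ∀ i i' : Fin ℓ, i < i' → ¬(a i' < β i ∧ β i < β i'))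
    (hstrγ : ∀ i, a i < γ i)
    (hncγ : ∀ i i' : Fin ℓ, i < i' → ¬(a i' < γ i ∧ γ i < γ i'))
    (j : ℕ) :
    (Finset.univ.filter (fun i => 2 ≤ a i ∧ a i ≤ j+2)).card
      + (Finset.univ.filter (fun i => a i = 1 ∧ (β i ≤ j+2 ∨ γ i ≤ j+2))).card
    = min (cnt a (j+1))
        (max ((Finset.univ.filter (fun i => 2 ≤ a i ∧ a i ≤ j+1)).card
              + (Finset.univ.filter (fun i => a i = 1 ∧ (β i ≤ j+1 ∨ γ i ≤ j+1))).card)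
          (max (cnt β (j+2)) (cnt γ (j+2))))
      + (cnt a (j+2) - cnt a (j+1)) := by
  simp only [cnt]
  have F1a : (univ.filter (fun i => a i ≤ j+1)).card
      = (univ.filter (fun i => a i = 1)).card
        + (univ.filter (fun i => 2 ≤ a i ∧ a i ≤ j+1)).card :=
    card_split (fun i => by have := ha1 i; omega) (fun i => by omega)
  have F1b : (univ.filter (fun i => a i ≤ j+2)).card
      = (univ.filter (fun i => a i = 1)).card
        + (univ.filter (fun i => 2 ≤ a i ∧ a i ≤ j+2)).card :=
    card_split (fun i => by have := ha1 i; omega) (fun i => by omega)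
  have F2a : (univ.filter (fun i => a i = 1)).card
      = (univ.filter (fun i => a i = 1 ∧ (β i ≤ j+1 ∨ γ i ≤ j+1))).card
        + (univ.filter (fun i => a i = 1 ∧ j+2 ≤ β i ∧ j+2 ≤ γ i)).card :=
    card_split (fun i => by omega) (fun i => by omega)
  have F2b : (univ.filter (fun i => a i = 1)).card
      = (univ.filter (fun i => a i = 1 ∧ (β i ≤ j+2 ∨ γ i ≤ j+2))).card
        + (univ.filter (fun i => a i = 1 ∧ j+3 ≤ β i ∧ j+3 ≤ γ i)).card :=
    card_split (fun i => by omega) (fun i => by omega)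
  have F3a := chain_card hamono ha1 hstrβ hncβ hstrγ hncγ (j+2) (j+2)
  have F3b := chain_card hamono ha1 hstrβ hncβ hstrγ hncγ (j+3) (j+3)
  have F4b := keyL1 hamono ha1 hstrβ hncβ (k := j+1) (by omega)
  have F4c := keyL1 hamono ha1 hstrγ hncγ (k := j+1) (by omega)
  have F5b := closerFact hstrβ (j+1)
  have F5c := closerFact hstrγ (j+1)
  have hmono1 : (univ.filter (fun i => a i ≤ j+1)).card
      ≤ (univ.filter (fun i => a i ≤ j+2)).card :=
    card_subset_le (fun i hi => by omega)
  simp only [show j+1+1 = j+2 from rfl, show j+1+2 = j+3 from rfl] at F4b F4c F5b F5c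
  omega

lemma identB (hamono : Monotone a) (ha1 : ∀ i, 1 ≤ a i)
    (hstrβ : ∀ i, a i < β i)
    (hncβ : ∀ i i' : Fin ℓ, i < i' → ¬(a i' < β i ∧ β i < β i'))
    (hstrγ : ∀ i, a i < γ i)
    (hncγ : ∀ i i' : Fin ℓ, i < i' → ¬(a i' < γ i ∧ γ i < γ i'))
    (j : ℕ) :
    (Finset.univ.filter (fun i => β i ≤ j+2 ∧ ¬(a i = 1 ∧ β i ≤ γ i))).card
    = (Finset.univ.filter (fun i => β i ≤ j+1 ∧ ¬(a i = 1 ∧ β i ≤ γ i))).card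
      + (max (cnt β (j+1)) (min (cnt β (j+2))
          ((Finset.univ.filter (fun i => 2 ≤ a i ∧ a i ≤ j+1)).card
            + (Finset.univ.filter (fun i => a i = 1 ∧ (β i ≤ j+1 ∨ γ i ≤ j+1))).card))
        - cnt β (j+1)) := by
  simp only [cnt]
  have G1 : (univ.filter (fun i => β i ≤ j+2 ∧ ¬(a i = 1 ∧ β i ≤ γ i))).card
      = (univ.filter (fun i => β i ≤ j+1 ∧ ¬(a i = 1 ∧ β i ≤ γ i))).card
        + (univ.filter (fun i => β i = j+2 ∧ ¬(a i = 1 ∧ β i ≤ γ i))).card :=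
    card_split (fun i => by omega) (fun i => by omega)
  have G2a : (univ.filter (fun i => β i ≤ j+2)).card
      = (univ.filter (fun i => β i ≤ j+1)).card
        + (univ.filter (fun i => β i = j+2)).card :=
    card_split (fun i => by omega) (fun i => by omega)
  have G2b : (univ.filter (fun i => β i = j+2)).card
      = (univ.filter (fun i => a i = 1 ∧ β i = j+2 ∧ j+2 ≤ γ i)).card
        + (univ.filter (fun i => β i = j+2 ∧ ¬(a i = 1 ∧ β i ≤ γ i))).card :=
    card_split (fun i => by omega) (fun i => by omega)
  have G4 : (univ.filter (fun i => a i = 1 ∧ j+2 ≤ β i ∧ j+2 ≤ γ i)).card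
      = (univ.filter (fun i => a i = 1 ∧ β i = j+2 ∧ j+2 ≤ γ i)).card
        + (univ.filter (fun i => a i = 1 ∧ j+3 ≤ β i ∧ j+2 ≤ γ i)).card :=
    card_split (fun i => by omega) (fun i => by omega)
  have G5 := chain_card hamono ha1 hstrβ hncβ hstrγ hncγ (j+2) (j+2)
  have G6 := chain_card hamono ha1 hstrβ hncβ hstrγ hncγ (j+3) (j+2)
  have G7 := keyL1 hamono ha1 hstrβ hncβ (k := j+1) (by omega)
  have G8 := closerFact hstrβ (j+1)
  have G9 := closerFact hstrβ j
  have G10 : 1 ≤ j → (univ.filter (fun i => a i = 1 ∧ j+2 ≤ β i)).card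
      ≤ (univ.filter (fun i => a i ≤ j ∧ j+2 ≤ β i)).card := by
    intro hj
    exact card_subset_le (fun i hi => ⟨by omega, hi.2⟩)
  have G11 : j = 0 → (univ.filter (fun i => β i ≤ j+1)).card = 0 := by
    intro hj
    subst hj
    rw [Finset.card_eq_zero, Finset.filter_eq_empty_iff]
    intro i _
    have := hstrβ i
    have := ha1 i
    omega
  have G12 : j = 0 → (univ.filter (fun i => a i ≤ j+1)).card
      = (univ.filter (fun i => a i = 1)).card := by
    intro hj
    subst hj
    exact card_congr' (fun i => by have := ha1 i; omega)
  have G13 : (univ.filter (fun i => a i ≤ j+1)).card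
      = (univ.filter (fun i => a i = 1)).card
        + (univ.filter (fun i => 2 ≤ a i ∧ a i ≤ j+1)).card :=
    card_split (fun i => by have := ha1 i; omega) (fun i => by omega)
  have F2a : (univ.filter (fun i => a i = 1)).card
      = (univ.filter (fun i => a i = 1 ∧ (β i ≤ j+1 ∨ γ i ≤ j+1))).card
        + (univ.filter (fun i => a i = 1 ∧ j+2 ≤ β i ∧ j+2 ≤ γ i)).card :=
    card_split (fun i => by omega) (fun i => by omega)
  have G14 : (univ.filter (fun i => a i ≤ j)).card
      ≤ (univ.filter (fun i => a i ≤ j+1)).card :=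
    card_subset_le (fun i hi => by omega)
  have G15 : (univ.filter (fun i => a i = 1 ∧ j+2 ≤ β i)).card
      ≤ (univ.filter (fun i => a i = 1)).card :=
    card_subset_le (fun i hi => hi.1)
  simp only [show j+1+1 = j+2 from rfl, show j+1+2 = j+3 from rfl] at G7 G8
  omega

end Ident2
section Master
set_option maxHeartbeats 1600000
open Finset

lemma cnt_perm {n : ℕ} (σ : Equiv.Perm (Fin n)) (u : Fin n → ℕ) (x : ℕ) :
    cnt (fun i => u (σ i)) x = cnt u x := by
  simp only [cnt]
  apply Finset.card_bij (fun i _ => σ i)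
  · intro i hi
    simp only [mem_filter, mem_univ, true_and] at *
    exact hi
  · intro i _ j _ h
    exact σ.injective h
  · intro j hj
    refine ⟨σ.symm j, ?_, by simp⟩
    simp only [mem_filter, mem_univ, true_and] at *
    simpa using hj

noncomputable def PhiA (ℓ : ℕ) (f : V → Fin ℓ → ℕ) (mB mC : Equiv.Perm (Fin ℓ)) (x : ℕ) : ℕ :=
  (Finset.univ.filter (fun i => 2 ≤ f V.A i ∧ f V.A i ≤ x)).card
    + (Finset.univ.filter (fun i => f V.A i = 1 ∧ (f V.B (mB i) ≤ x ∨ f V.C (mC i) ≤ x))).card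

noncomputable def PhiB (ℓ : ℕ) (f : V → Fin ℓ → ℕ) (mB mC : Equiv.Perm (Fin ℓ)) (x : ℕ) : ℕ :=
  (Finset.univ.filter (fun i =>
    f V.B (mB i) ≤ x ∧ ¬(f V.A i = 1 ∧ f V.B (mB i) ≤ f V.C (mC i)))).card

noncomputable def PhiC (ℓ : ℕ) (f : V → Fin ℓ → ℕ) (mB mC : Equiv.Perm (Fin ℓ)) (x : ℕ) : ℕ :=
  (Finset.univ.filter (fun i =>
    f V.C (mC i) ≤ x ∧ ¬(f V.A i = 1 ∧ f V.C (mC i) ≤ f V.B (mB i)))).card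

def ProInv (ℓ q : ℕ) (f : V → Fin ℓ → ℕ) (mB mC : Equiv.Perm (Fin ℓ))
    (j : ℕ) (g : V → Fin ℓ → ℕ) : Prop :=
  IsVL ℓ q g ∧
  (∀ x, x ≤ j → cnt (g V.A) x = PhiA ℓ f mB mC (x+1) ∧
    cnt (g V.B) x = PhiB ℓ f mB mC (x+1) ∧ cnt (g V.C) x = PhiC ℓ f mB mC (x+1)) ∧
  (∀ p x, j < x → cnt (g p) x = cnt (f p) x)

variable {ℓ q : ℕ} {f : V → Fin ℓ → ℕ} {mB mC : Equiv.Perm (Fin ℓ)}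

lemma inv_base (hf : IsVL ℓ q f) (hmB : IsNCMatching ℓ f V.B mB)
    (hmC : IsNCMatching ℓ f V.C mC) : ProInv ℓ q f mB mC 0 f := by
  refine ⟨hf, ?_, fun p x _ => rfl⟩
  intro x hx
  interval_cases x
  have hz : ∀ (u : Fin ℓ → ℕ), (∀ i, 1 ≤ u i) → cnt u 0 = 0 := by
    intro u hu
    rw [cnt, Finset.card_eq_zero, Finset.filter_eq_empty_iff]
    intro i _
    have := hu i
    omega
  refine ⟨?_, ?_, ?_⟩
  · rw [hz (f V.A) (fun i => (hf.1 V.A i).1), PhiA]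
    have e1 : (univ.filter (fun i : Fin ℓ => 2 ≤ f V.A i ∧ f V.A i ≤ 0+1)).card = 0 := by
      rw [Finset.card_eq_zero, Finset.filter_eq_empty_iff]
      intro i _
      omega
    have e2 : (univ.filter (fun i : Fin ℓ =>
        f V.A i = 1 ∧ (f V.B (mB i) ≤ 0+1 ∨ f V.C (mC i) ≤ 0+1))).card = 0 := by
      rw [Finset.card_eq_zero, Finset.filter_eq_empty_iff]
      intro i _
      have h1 := hmB.1 i
      have h2 := hmC.1 i
      have h3 := (hf.1 V.A i).1
      omega
    omega
  · rw [hz (f V.B) (fun i => (hf.1 V.B i).1), PhiB]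
    symm
    rw [Finset.card_eq_zero, Finset.filter_eq_empty_iff]
    intro i _
    have h1 := hmB.1 i
    have h3 := (hf.1 V.A i).1
    omega
  · rw [hz (f V.C) (fun i => (hf.1 V.C i).1), PhiC]
    symm
    rw [Finset.card_eq_zero, Finset.filter_eq_empty_iff]
    intro i _
    have h1 := hmC.1 i
    have h3 := (hf.1 V.A i).1
    omega

lemma inv_step (hf : IsVL ℓ q f) (hmB : IsNCMatching ℓ f V.B mB)
    (hmC : IsNCMatching ℓ f V.C mC) (j : ℕ) (hj : j + 2 ≤ q)
    (g : V → Fin ℓ → ℕ) (hInv : ProInv ℓ q f mB mC j g) :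
    ProInv ℓ q f mB mC (j+1) (BK ℓ q (j+1) g) := by
  have hg := hInv.1
  have hk : 1 ≤ j + 1 := by omega
  have hkq : (j+1) + 1 ≤ q := by omega
  have hA := cntA_facts hg hk
  have hB := cntP_facts hg vne1 hk (by omega)
  have hC := cntP_facts hg vne2 hk (by omega)
  -- current counts
  have hgA_k : cnt (g V.A) (j+1) = cnt (f V.A) (j+1) := hInv.2.2 V.A (j+1) (by omega)
  have hgA_k1 : cnt (g V.A) (j+2) = cnt (f V.A) (j+2) := hInv.2.2 V.A (j+2) (by omega)
  have hgB_k : cnt (g V.B) (j+1) = cnt (f V.B) (j+1) := hInv.2.2 V.B (j+1) (by omega)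
  have hgB_k1 : cnt (g V.B) (j+2) = cnt (f V.B) (j+2) := hInv.2.2 V.B (j+2) (by omega)
  have hgC_k : cnt (g V.C) (j+1) = cnt (f V.C) (j+1) := hInv.2.2 V.C (j+1) (by omega)
  have hgC_k1 : cnt (g V.C) (j+2) = cnt (f V.C) (j+2) := hInv.2.2 V.C (j+2) (by omega)
  have hgA_j := (hInv.2.1 j (le_refl j)).1
  have hgB_j := (hInv.2.1 j (le_refl j)).2.1
  have hgC_j := (hInv.2.1 j (le_refl j)).2.2
  -- permutation count identities
  have hpB : ∀ x, cnt (fun i => f V.B (mB i)) x = cnt (f V.B) x := fun x => cnt_perm mB _ x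
  have hpC : ∀ x, cnt (fun i => f V.C (mC i)) x = cnt (f V.C) x := fun x => cnt_perm mC _ x
  -- abstract identity inputs
  have hamono : Monotone (f V.A) := hf.2.2 V.A
  have ha1 : ∀ i, 1 ≤ f V.A i := fun i => (hf.1 V.A i).1
  have hstrβ : ∀ i, f V.A i < f V.B (mB i) := hmB.1
  have hncβ : ∀ i i' : Fin ℓ, i < i' →
      ¬(f V.A i' < f V.B (mB i) ∧ f V.B (mB i) < f V.B (mB i')) := fun i i' h => hmB.2 i i' h
  have hstrγ : ∀ i, f V.A i < f V.C (mC i) := hmC.1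
  have hncγ : ∀ i i' : Fin ℓ, i < i' →
      ¬(f V.A i' < f V.C (mC i) ∧ f V.C (mC i) < f V.C (mC i')) := fun i i' h => hmC.2 i i' h
  have idA := identA hamono ha1 hstrβ hncβ hstrγ hncγ j
  have idB := identB hamono ha1 hstrβ hncβ hstrγ hncγ j
  have idC := identB hamono ha1 hstrγ hncγ hstrβ hncβ j
  have hswap : (univ.filter (fun i => f V.A i = 1 ∧ (f V.C (mC i) ≤ j+1 ∨ f V.B (mB i) ≤ j+1))).card
      = (univ.filter (fun i => f V.A i = 1 ∧ (f V.B (mB i) ≤ j+1 ∨ f V.C (mC i) ≤ j+1))).card :=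
    card_congr' (fun i => by tauto)
  refine ⟨BK_isVL hg hk hkq, ?_, ?_⟩
  · intro x hx
    rcases Nat.lt_or_ge x (j+1) with hxj | hxj
    · have hxne : x ≠ j + 1 := by omega
      have h1 := (hInv.2.1 x (by omega))
      exact ⟨by rw [hA.1 x hxne]; exact h1.1,
        by rw [hB.1 x hxne]; exact h1.2.1,
        by rw [hC.1 x hxne]; exact h1.2.2⟩
    · have hxk : x = j + 1 := by omega
      subst hxk
      refine ⟨?_, ?_, ?_⟩
      · rw [hA.2]
        simp only [s0A, PhiA] at *
        rw [hgA_k, hgA_k1, hgB_k1, hgC_k1] at *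
        rw [show j + 1 - 1 = j from rfl] at *
        rw [hgA_j] at *
        simp only [PhiA] at *
        rw [← hpB (j+2), ← hpC (j+2)]
        rw [show j + 1 + 1 = j + 2 from rfl]
        omega
      · rw [hB.2]
        simp only [t2P, PhiB] at *
        rw [show j + 1 - 1 = j from rfl] at *
        rw [hgB_j, hgB_k, hgB_k1, hgA_j] at *
        simp only [PhiA, PhiB] at *
        rw [← hpB (j+1), ← hpB (j+2)]
        rw [show j + 1 + 1 = j + 2 from rfl]
        omega
      · rw [hC.2]
        simp only [t2P, PhiC] at *
        rw [show j + 1 - 1 = j from rfl] at *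
        rw [hgC_j, hgC_k, hgC_k1, hgA_j] at *
        simp only [PhiA, PhiC] at *
        rw [← hpC (j+1), ← hpC (j+2)]
        rw [show j + 1 + 1 = j + 2 from rfl]
        omega
  · intro p x hx
    have hxne : x ≠ j + 1 := by omega
    have hgx : cnt (g p) x = cnt (f p) x := hInv.2.2 p x (by omega)
    cases p
    · rw [hA.1 x hxne]; exact hgx
    · rw [hB.1 x hxne]; exact hgx
    · rw [hC.1 x hxne]; exact hgx

theorem master (hq : 3 ≤ q) (hf : IsVL ℓ q f) (hmB : IsNCMatching ℓ f V.B mB)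
    (hmC : IsNCMatching ℓ f V.C mC) :
    IsVL ℓ q (Pro ℓ q f) ∧
      ∀ x, x + 1 ≤ q →
        cnt (Pro ℓ q f V.A) x = PhiA ℓ f mB mC (x+1) ∧
        cnt (Pro ℓ q f V.B) x = PhiB ℓ f mB mC (x+1) ∧
        cnt (Pro ℓ q f V.C) x = PhiC ℓ f mB mC (x+1) := by
  have hfold : ∀ j, j + 1 ≤ q →
      ProInv ℓ q f mB mC j ((List.range j).foldl (fun g k => BK ℓ q (k+1) g) f) := by
    intro j
    induction j with
    | zero =>
      intro _
      simpa using inv_base hf hmB hmC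
    | succ n ih =>
      intro hj
      rw [List.range_succ, List.foldl_append]
      exact inv_step hf hmB hmC n (by omega) _ (ih (by omega))
  have hmain := hfold (q-1) (by omega)
  have hPro : Pro ℓ q f = (List.range (q-1)).foldl (fun g k => BK ℓ q (k+1) g) f := rfl
  rw [← hPro] at hmain
  exact ⟨hmain.1, fun x hx => hmain.2.1 x (by omega)⟩

end Master
section Final
set_option maxHeartbeats 1600000
open Finset

lemma cnt_full {n : ℕ} (u : Fin n → ℕ) (x : ℕ) (h : ∀ i, u i ≤ x) : cnt u x = n := by
  rw [cnt, Finset.filter_true_of_mem (fun i _ => h i)]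
  simp

lemma fin1_card (P : Fin 1 → Prop) [DecidablePred P] :
    (Finset.univ.filter P).card = if P 0 then 1 else 0 := by
  have hu : (Finset.univ : Finset (Fin 1)) = {0} := rfl
  rw [hu, Finset.filter_singleton]
  split_ifs <;> simp

lemma multiset_eq_of_cnt {n : ℕ} (u v : Fin n → ℕ) (h : ∀ x, cnt u x = cnt v x) :
    Finset.univ.val.map u = Finset.univ.val.map v := by
  ext y
  have key : ∀ w : Fin n → ℕ, Multiset.count y (Finset.univ.val.map w)
      = (Finset.univ.filter (fun i => w i = y)).card := by
    intro w
    rw [Multiset.count_map]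
    rw [show (Finset.univ.filter (fun i => w i = y)).card
      = (Multiset.filter (fun i => w i = y) Finset.univ.val).card from rfl]
    congr 1
    exact Multiset.filter_congr (fun a _ => by constructor <;> omega)
  rw [key u, key v]
  rcases y with _ | y'
  · have hu : cnt u 0 = (Finset.univ.filter (fun i => u i = 0)).card := by
      rw [cnt]; exact card_congr' (fun i => by omega)
    have hv : cnt v 0 = (Finset.univ.filter (fun i => v i = 0)).card := by
      rw [cnt]; exact card_congr' (fun i => by omega)
    have := h 0
    omega
  · have hu : cnt u (y'+1) = cnt u y' + (Finset.univ.filter (fun i => u i = y'+1)).card := by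
      rw [cnt, cnt]; exact card_split (fun i => by omega) (fun i => by omega)
    have hv : cnt v (y'+1) = cnt v y' + (Finset.univ.filter (fun i => v i = y'+1)).card := by
      rw [cnt, cnt]; exact card_split (fun i => by omega) (fun i => by omega)
    have h1 := h y'
    have h2 := h (y'+1)
    omega

end Final

theorem stmt3' (ℓ q : ℕ) (hℓ : 1 ≤ ℓ) (hq : 3 ≤ q)
    (f : V → Fin ℓ → ℕ) (hf : IsVL ℓ q f)
    (mB mC : Equiv.Perm (Fin ℓ))
    (hmB : IsNCMatching ℓ f V.B mB) (hmC : IsNCMatching ℓ f V.C mC) :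
    (∀ p, Monotone (Pro ℓ q f p)) ∧
      ∀ p, (Finset.univ.val.map fun j : Fin ℓ => Pro ℓ q f p j) =
        (Finset.univ.val.map fun i : Fin ℓ => Pro1 q (Layer ℓ f mB mC i) p) := by
  classical
  have hmaster := master hq hf hmB hmC
  -- the single-layer data
  have hL : ∀ i : Fin ℓ, IsVL 1 q (fun p _ => Layer ℓ f mB mC i p) := by
    intro i
    refine ⟨?_, ?_, ?_⟩
    · intro p j
      cases p
      · exact hf.1 V.A i
      · exact hf.1 V.B (mB i)
      · exact hf.1 V.C (mC i)
    · intro j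
      exact ⟨hmB.1 i, hmC.1 i⟩
    · intro p a b hab
      have : a = b := Subsingleton.elim a b
      subst this
      exact le_refl _
  have hLB : ∀ i : Fin ℓ, IsNCMatching 1 (fun p _ => Layer ℓ f mB mC i p) V.B
      (Equiv.refl (Fin 1)) := by
    intro i
    refine ⟨fun s => hmB.1 i, fun s s' hss => ?_⟩
    have : s = s' := Subsingleton.elim s s'
    subst this
    exact absurd hss (lt_irrefl s)
  have hLC : ∀ i : Fin ℓ, IsNCMatching 1 (fun p _ => Layer ℓ f mB mC i p) V.C
      (Equiv.refl (Fin 1)) := by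
    intro i
    refine ⟨fun s => hmC.1 i, fun s s' hss => ?_⟩
    have : s = s' := Subsingleton.elim s s'
    subst this
    exact absurd hss (lt_irrefl s)
  have hlayer := fun i : Fin ℓ =>
    master (ℓ := 1) hq (hL i) (hLB i) (hLC i)
  have hval : ∀ (i : Fin ℓ) (p : V) (x : ℕ),
      Pro1 q (Layer ℓ f mB mC i) p ≤ x ↔
        0 < cnt (Pro 1 q (fun p' _ => Layer ℓ f mB mC i p') p) x := by
    intro i p x
    have hmono := (hlayer i).1.2.2 p
    have hr := cnt_rank hmono (0 : Fin 1) x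
    rw [show Pro1 q (Layer ℓ f mB mC i) p
      = Pro 1 q (fun p' _ => Layer ℓ f mB mC i p') p 0 from rfl]
    simpa using hr
  constructor
  · exact fun p => hmaster.1.2.2 p
  · intro p
    apply multiset_eq_of_cnt
    intro x
    rcases le_or_gt (x+1) q with hx | hx
    · cases p
      · -- V.A
        have hiff : ∀ i : Fin ℓ, Pro1 q (Layer ℓ f mB mC i) V.A ≤ x ↔
            ((2 ≤ f V.A i ∧ f V.A i ≤ x+1) ∨
              (f V.A i = 1 ∧ (f V.B (mB i) ≤ x+1 ∨ f V.C (mC i) ≤ x+1))) := by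
          intro i
          rw [hval i V.A x, ((hlayer i).2 x hx).1, PhiA, fin1_card, fin1_card]
          split_ifs <;> simp only [Layer, Equiv.refl_apply] at * <;> omega
        have hsplit : (Finset.univ.filter (fun i : Fin ℓ =>
              (2 ≤ f V.A i ∧ f V.A i ≤ x+1) ∨
                (f V.A i = 1 ∧ (f V.B (mB i) ≤ x+1 ∨ f V.C (mC i) ≤ x+1)))).card
            = (Finset.univ.filter (fun i : Fin ℓ => 2 ≤ f V.A i ∧ f V.A i ≤ x+1)).card
              + (Finset.univ.filter (fun i : Fin ℓ =>
                  f V.A i = 1 ∧ (f V.B (mB i) ≤ x+1 ∨ f V.C (mC i) ≤ x+1))).card :=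
          card_split (fun i => Iff.rfl) (fun i => by omega)
        show cnt (fun j => Pro ℓ q f V.A j) x = _
        rw [show (fun j => Pro ℓ q f V.A j) = Pro ℓ q f V.A from rfl,
          (hmaster.2 x hx).1, cnt, card_congr' hiff, PhiA]
        exact hsplit.symm
      · -- V.B
        have hiff : ∀ i : Fin ℓ, Pro1 q (Layer ℓ f mB mC i) V.B ≤ x ↔
            (f V.B (mB i) ≤ x+1 ∧ ¬(f V.A i = 1 ∧ f V.B (mB i) ≤ f V.C (mC i))) := by
          intro i
          rw [hval i V.B x, ((hlayer i).2 x hx).2.1, PhiB, fin1_card]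
          split_ifs <;> simp only [Layer, Equiv.refl_apply] at * <;> omega
        show cnt (fun j => Pro ℓ q f V.B j) x = _
        rw [show (fun j => Pro ℓ q f V.B j) = Pro ℓ q f V.B from rfl,
          (hmaster.2 x hx).2.1, cnt, card_congr' hiff, PhiB]
      · -- V.C
        have hiff : ∀ i : Fin ℓ, Pro1 q (Layer ℓ f mB mC i) V.C ≤ x ↔
            (f V.C (mC i) ≤ x+1 ∧ ¬(f V.A i = 1 ∧ f V.C (mC i) ≤ f V.B (mB i))) := by
          intro i
          rw [hval i V.C x, ((hlayer i).2 x hx).2.2, PhiC, fin1_card]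
          split_ifs <;> simp only [Layer, Equiv.refl_apply] at * <;> omega
        show cnt (fun j => Pro ℓ q f V.C j) x = _
        rw [show (fun j => Pro ℓ q f V.C j) = Pro ℓ q f V.C from rfl,
          (hmaster.2 x hx).2.2, cnt, card_congr' hiff, PhiC]
    · have hL1 : cnt (fun j => Pro ℓ q f p j) x = ℓ := by
        apply cnt_full
        intro i
        have := (hmaster.1.1 p i).2
        omega
      have hL2 : cnt (fun i : Fin ℓ => Pro1 q (Layer ℓ f mB mC i) p) x = ℓ := by
        apply cnt_full
        intro i
        have := ((hlayer i).1.1 p 0).2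
        rw [show Pro1 q (Layer ℓ f mB mC i) p
          = Pro 1 q (fun p' _ => Layer ℓ f mB mC i p') p 0 from rfl]
        omega
      rw [hL1, hL2]

/-- `Pro(f)` is obtained from the noncrossing layer decomposition `{L'_i}` of `f` by
applying single-layer promotion to each `L'_i` and then sorting the labels within each
fiber weakly increasingly; equivalently, the fibers of `Pro(f)` are weakly increasing
and, for each `p ∈ {A,B,C}`, the multiset of labels of `Pro(f)` on the fiber of `p`
equals the multiset `{Pro(L'_i)(p) : 1 ≤ i ≤ ℓ}`. -/
theorem stmt3 (ℓ q : ℕ) (hℓ : 1 ≤ ℓ) (hq : 3 ≤ q)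
    (f : V → Fin ℓ → ℕ) (hf : IsVL ℓ q f)
    (mB mC : Equiv.Perm (Fin ℓ))
    (hmB : IsNCMatching ℓ f V.B mB) (hmC : IsNCMatching ℓ f V.C mC) :
    (∀ p, Monotone (Pro ℓ q f p)) ∧
      ∀ p, (Finset.univ.val.map fun j : Fin ℓ => Pro ℓ q f p j) =
        (Finset.univ.val.map fun i : Fin ℓ => Pro1 q (Layer ℓ f mB mC i) p) :=
  stmt3' ℓ q hℓ hq f hf mB mC hmB hmC
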